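/- Let G be a digraph with a piece decomposition as above and reachability-preserving certificates X_P, and let X = ⋃_P X_P. Let S* be an SCC of G not contained in the vertex set of any single piece. Then S* ∩ ∂R ≠ ∅, and there is an SCC B of X with B ∩ ∂R = S* ∩ ∂R; moreover for every piece P with S* ∩ V(P) ≠ ∅ we have S* ∩ ∂P ≠ ∅. -/

import Mathlib

/-- With a piece decomposition of `G` and reachability-preserving
certificates `X i` (union `X`), any SCC `S` of `G` not contained in a single
piece intersects the total boundary `∂R`; there is an SCC `B` of `X` with
`B ∩ ι(∂R) = ι(S ∩ ∂R)`; and every piece meeting `S` meets `S` at its boundary. -/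
theorem stmt17 {V W I : Type*} (ι : V → W) (hι : Function.Injective ι)
    (E : V → V → Prop) (EP : I → V → V → Prop)
    (hcover : ∀ u v, E u v ↔ ∃ i, EP i u v)
    (VP : I → Set V) (hVP : ∀ i, VP i = {v | ∃ u, EP i v u ∨ EP i u v})
    (hvert : ∀ v : V, ∃ i, v ∈ VP i)
    (bP : I → Set V) (hbP : ∀ i, bP i = {v | v ∈ VP i ∧ ∃ j, j ≠ i ∧ v ∈ VP j})
    (X : I → W → W → Prop)
    (VX : I → Set W) (hVX : ∀ i, VX i = {w | ∃ w', X i w w' ∨ X i w' w})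
    (hcert : ∀ i, ∀ u ∈ bP i, ∀ v ∈ bP i,
      (Relation.ReflTransGen (EP i) u v ↔ Relation.ReflTransGen (X i) (ι u) (ι v)))
    (himg : ∀ i u, ι u ∈ VX i → u ∈ bP i)
    (hpriv : ∀ i j, i ≠ j → ∀ w, w ∈ VX i → w ∈ VX j → ∃ u, w = ι u)
    (S : Set V)
    (hS : ∃ r, S = {w | Relation.ReflTransGen E r w ∧ Relation.ReflTransGen E w r})
    (hbig : ∀ i, ¬ S ⊆ VP i) :
    (S ∩ ⋃ i, bP i).Nonempty ∧
    (∃ B : Set W,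
      (∃ r, B = {w | Relation.ReflTransGen (fun a c => ∃ i, X i a c) r w ∧
                     Relation.ReflTransGen (fun a c => ∃ i, X i a c) w r}) ∧
      B ∩ (ι '' ⋃ i, bP i) = ι '' (S ∩ ⋃ i, bP i)) ∧
    (∀ i, (S ∩ VP i).Nonempty → (S ∩ bP i).Nonempty) := by
  classical
  obtain ⟨r, hSdef⟩ := hS
  set R' : W → W → Prop := fun a c => ∃ i, X i a c with hR'
  -- basic membership facts
  have hbsub : ∀ i, ∀ v ∈ bP i, v ∈ VP i := by
    intro i v hv; rw [hbP] at hv; exact hv.1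
  have hb_of : ∀ i j, ∀ v, v ∈ VP i → v ∈ VP j → i ≠ j → v ∈ bP i := by
    intro i j v hvi hvj hij
    rw [hbP]; exact ⟨hvi, j, hij.symm, hvj⟩
  have hVPleft : ∀ k u w, EP k u w → u ∈ VP k := by
    intro k u w h; rw [hVP]; exact ⟨w, Or.inl h⟩
  have hVPright : ∀ k u w, EP k u w → w ∈ VP k := by
    intro k u w h; rw [hVP]; exact ⟨u, Or.inr h⟩
  have hVXleft : ∀ k a c, X k a c → a ∈ VX k := by
    intro k a c h; rw [hVX]; exact ⟨c, Or.inl h⟩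
  have hVXright : ∀ k a c, X k a c → c ∈ VX k := by
    intro k a c h; rw [hVX]; exact ⟨a, Or.inr h⟩
  have hmemb : ∀ v, v ∈ (⋃ j, bP j) → ∀ i, v ∈ VP i → v ∈ bP i := by
    intro v hv i hvi
    obtain ⟨j, hj⟩ := Set.mem_iUnion.mp hv
    by_cases hji : j = i
    · exact hji ▸ hj
    · exact hb_of i j v hvi (hbsub j v hj) (fun h => hji h.symm)
  have hEPtoE : ∀ k u v, Relation.ReflTransGen (EP k) u v → Relation.ReflTransGen E u v := by
    intro k u v h
    exact Relation.ReflTransGen.mono (p := E) (fun x y hxy => (hcover x y).mpr ⟨k, hxy⟩) _ _ h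
  -- Lemma C: a path leaving a piece crosses its boundary
  have lemC : ∀ u v, Relation.ReflTransGen E u v → ∀ i, u ∈ VP i → v ∉ VP i →
      ∃ b, b ∈ bP i ∧ Relation.ReflTransGen E u b ∧ Relation.ReflTransGen E b v := by
    intro u v huv
    induction huv using Relation.ReflTransGen.head_induction_on with
    | refl => intro i hv hv'; exact absurd hv hv'
    | @head a c h htail ih =>
      intro i hai hvi
      obtain ⟨k, hk⟩ := (hcover a c).mp h
      by_cases hki : k = i
      · subst hki
        obtain ⟨b, hb, hcb, hbv⟩ := ih k (hVPright k a c hk) hvi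
        exact ⟨b, hb, Relation.ReflTransGen.head h hcb, hbv⟩
      · exact ⟨a, hb_of i k a hai (hVPleft k a c hk) (fun hh => hki hh.symm),
          Relation.ReflTransGen.refl, Relation.ReflTransGen.head h htail⟩
  -- Lemma A (strengthened forward direction)
  have lemA0 : ∀ u v, Relation.ReflTransGen E u v → v ∈ (⋃ j, bP j) →
      ∀ i, u ∈ VP i → ∃ b, b ∈ bP i ∧ Relation.ReflTransGen (EP i) u b ∧
        Relation.ReflTransGen R' (ι b) (ι v) := by
    intro u v huv
    induction huv using Relation.ReflTransGen.head_induction_on with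
    | refl =>
      intro hv i hvi
      exact ⟨v, hmemb v hv i hvi, Relation.ReflTransGen.refl, Relation.ReflTransGen.refl⟩
    | @head a c h htail ih =>
      intro hv i hai
      obtain ⟨k, hk⟩ := (hcover a c).mp h
      by_cases hki : k = i
      · subst hki
        obtain ⟨b, hb, hcb, hX⟩ := ih hv k (hVPright k a c hk)
        exact ⟨b, hb, Relation.ReflTransGen.head hk hcb, hX⟩
      · have hak : a ∈ VP k := hVPleft k a c hk
        have habi : a ∈ bP i := hb_of i k a hai hak (fun hh => hki hh.symm)
        have habk : a ∈ bP k := hb_of k i a hak hai hki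
        obtain ⟨b, hbk, hcb, hX⟩ := ih hv k (hVPright k a c hk)
        have hEPab : Relation.ReflTransGen (EP k) a b := Relation.ReflTransGen.head hk hcb
        have hXab : Relation.ReflTransGen (X k) (ι a) (ι b) :=
          (hcert k a habk b hbk).mp hEPab
        have hR'ab : Relation.ReflTransGen R' (ι a) (ι b) :=
          Relation.ReflTransGen.mono (p := R') (fun x y hxy => ⟨k, hxy⟩) _ _ hXab
        exact ⟨a, habi, Relation.ReflTransGen.refl, hR'ab.trans hX⟩
  have lemA : ∀ u v, u ∈ (⋃ j, bP j) → v ∈ (⋃ j, bP j) →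
      Relation.ReflTransGen E u v → Relation.ReflTransGen R' (ι u) (ι v) := by
    intro u v hu hv huv
    obtain ⟨i, hui⟩ := Set.mem_iUnion.mp hu
    obtain ⟨b, hb, hEP, hX⟩ := lemA0 u v huv hv i (hbsub i u hui)
    have hXub : Relation.ReflTransGen (X i) (ι u) (ι b) := (hcert i u hui b hb).mp hEP
    exact (Relation.ReflTransGen.mono (p := R') (fun x y hxy => ⟨i, hxy⟩) _ _ hXub).trans hX
  -- Lemma B (strengthened backward direction)
  have lemB0 : ∀ a b, Relation.ReflTransGen R' a b → ∀ v, ι v = b → v ∈ (⋃ j, bP j) →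
      ∀ i, (a ∈ VX i ∨ ∃ u, ι u = a ∧ u ∈ bP i) →
      ∃ c, c ∈ bP i ∧ Relation.ReflTransGen (X i) a (ι c) ∧ Relation.ReflTransGen E c v := by
    intro a b hab
    induction hab using Relation.ReflTransGen.head_induction_on with
    | refl =>
      intro v hvb hv i hyp
      subst hvb
      rcases hyp with hvx | ⟨u, hua, hub⟩
      · exact ⟨v, himg i v hvx, Relation.ReflTransGen.refl, Relation.ReflTransGen.refl⟩
      · have : u = v := hι hua
        subst this
        exact ⟨u, hub, Relation.ReflTransGen.refl, Relation.ReflTransGen.refl⟩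
    | @head a c h htail ih =>
      intro v hvb hv i hyp
      obtain ⟨k, hk⟩ := h
      have haVXk : a ∈ VX k := hVXleft k a c hk
      have hcVXk : c ∈ VX k := hVXright k a c hk
      have common : ∀ u, ι u = a → u ∈ bP i →
          ∃ d, d ∈ bP i ∧ Relation.ReflTransGen (X i) a (ι d) ∧
            Relation.ReflTransGen E d v := by
        intro u hua hubi
        have huk : u ∈ bP k := himg k u (by rw [hua]; exact haVXk)
        obtain ⟨d, hdk, hXc, hEc⟩ := ih v hvb hv k (Or.inl hcVXk)
        have hXad : Relation.ReflTransGen (X k) (ι u) (ι d) := by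
          rw [hua]; exact Relation.ReflTransGen.head hk hXc
        have hEP : Relation.ReflTransGen (EP k) u d := (hcert k u huk d hdk).mpr hXad
        refine ⟨u, hubi, ?_, (hEPtoE k u d hEP).trans hEc⟩
        rw [hua]
      rcases hyp with hvx | ⟨u, hua, hub⟩
      · by_cases hki : k = i
        · subst hki
          obtain ⟨d, hd, hXc, hEc⟩ := ih v hvb hv k (Or.inl hcVXk)
          exact ⟨d, hd, Relation.ReflTransGen.head hk hXc, hEc⟩
        · obtain ⟨u, hau⟩ := hpriv i k (fun hh => hki hh.symm) a hvx haVXk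
          have hubi : u ∈ bP i := himg i u (by rw [← hau]; exact hvx)
          exact common u hau.symm hubi
      · exact common u hua hub
  have lemB : ∀ u v, u ∈ (⋃ j, bP j) → v ∈ (⋃ j, bP j) →
      Relation.ReflTransGen R' (ι u) (ι v) → Relation.ReflTransGen E u v := by
    intro u v hu hv huv
    obtain ⟨i, hui⟩ := Set.mem_iUnion.mp hu
    obtain ⟨c, hc, hXc, hEc⟩ := lemB0 (ι u) (ι v) huv v rfl hv i (Or.inr ⟨u, rfl, hui⟩)
    have hEP : Relation.ReflTransGen (EP i) u c := (hcert i u hui c hc).mpr hXc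
    exact (hEPtoE i u c hEP).trans hEc
  -- SCC facts
  have hmemS : ∀ x, x ∈ S ↔ Relation.ReflTransGen E r x ∧ Relation.ReflTransGen E x r := by
    intro x; rw [hSdef]; rfl
  have hrS : r ∈ S := (hmemS r).mpr ⟨Relation.ReflTransGen.refl, Relation.ReflTransGen.refl⟩
  -- part 3
  have part3 : ∀ i, (S ∩ VP i).Nonempty → (S ∩ bP i).Nonempty := by
    intro i ⟨u, huS, huV⟩
    obtain ⟨s, hsS, hsV⟩ : ∃ s, s ∈ S ∧ s ∉ VP i := by
      by_contra h
      push_neg at h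
      exact hbig i (fun x hx => h x hx)
    obtain ⟨hru, hur⟩ := (hmemS u).mp huS
    obtain ⟨hrs, hsr⟩ := (hmemS s).mp hsS
    obtain ⟨b, hb, hub, hbs⟩ := lemC u s (hur.trans hrs) i huV hsV
    exact ⟨b, (hmemS b).mpr ⟨hru.trans hub, hbs.trans hsr⟩, hb⟩
  -- part 1
  have part1 : (S ∩ ⋃ j, bP j).Nonempty := by
    obtain ⟨i, hri⟩ := hvert r
    obtain ⟨b, hbS, hbb⟩ := part3 i ⟨r, hrS, hri⟩
    exact ⟨b, hbS, Set.mem_iUnion.mpr ⟨i, hbb⟩⟩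
  refine ⟨part1, ?_, part3⟩
  -- part 2
  obtain ⟨p, hpS, hpB⟩ := part1
  obtain ⟨hrp, hpr⟩ := (hmemS p).mp hpS
  refine ⟨{w | Relation.ReflTransGen R' (ι p) w ∧ Relation.ReflTransGen R' w (ι p)},
    ⟨ι p, rfl⟩, ?_⟩
  ext w
  constructor
  · rintro ⟨⟨hpw, hwp⟩, u, huB, rfl⟩
    have h1 : Relation.ReflTransGen E p u := lemB p u hpB huB hpw
    have h2 : Relation.ReflTransGen E u p := lemB u p huB hpB hwp
    exact ⟨u, ⟨(hmemS u).mpr ⟨hrp.trans h1, h2.trans hpr⟩, huB⟩, rfl⟩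
  · rintro ⟨u, ⟨huS, huB⟩, rfl⟩
    obtain ⟨hru, hur⟩ := (hmemS u).mp huS
    exact ⟨⟨lemA p u hpB huB (hpr.trans hru), lemA u p huB hpB (hur.trans hrp)⟩,
      u, huB, rfl⟩
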